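/- Let ≺ be a linear order on a set V and let a₁, …, a_m, b₁, …, b_m be 2m distinct elements of V with a₁ ≺ a₂ ≺ ⋯ ≺ a_m. Suppose: (i) for all j, k ∈ {1,…,m}, a_j ≺ a_k if and only if b_j ≺ b_k; (ii) either a_j ≺ b_j for every j, or b_j ≺ a_j for every j; and (iii) no two of the pairs {a_j, b_j} and {a_k, b_k} with j ≠ k cross with respect to ≺. Then either a₁ ≺ b₁ ≺ a₂ ≺ b₂ ≺ ⋯ ≺ a_m ≺ b_m, or b₁ ≺ a₁ ≺ b₂ ≺ a₂ ≺ ⋯ ≺ b_m ≺ a_m. -/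

import Mathlib

open SimpleGraph

/-- Two (unordered) pairs of vertices cross with respect to the strict order `lt`:
with `e = {v,w}`, `f = {x,y}`, `v ≺ w`, `x ≺ y`, they cross if
`v ≺ x ≺ w ≺ y` or `x ≺ v ≺ y ≺ w`. -/
def Cross {V : Type*} (lt : V → V → Prop) (e f : Sym2 V) : Prop :=
  ∃ v w x y : V, e = s(v, w) ∧ f = s(x, y) ∧
    ((lt v x ∧ lt x w ∧ lt w y) ∨ (lt x v ∧ lt v y ∧ lt y w))

/-- Two (unordered) pairs of vertices nest with respect to the strict order `lt`:
with `e = {v,w}`, `f = {x,y}`, `v ≺ w`, `x ≺ y`, they nest if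
`v ≺ x ≺ y ≺ w` or `x ≺ v ≺ w ≺ y`. -/
def Nest {V : Type*} (lt : V → V → Prop) (e f : Sym2 V) : Prop :=
  ∃ v w x y : V, e = s(v, w) ∧ f = s(x, y) ∧
    ((lt v x ∧ lt x y ∧ lt y w) ∨ (lt x v ∧ lt v w ∧ lt w y))

/-- `(lt, φ)` is a `k`-stack layout of `G`: `lt` is a linear (strict total) order on the
vertices and no two edges with the same colour cross. -/
def IsStackLayout {V : Type*} {k : ℕ} (G : SimpleGraph V)
    (lt : V → V → Prop) (φ : Sym2 V → Fin k) : Prop :=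
  IsStrictTotalOrder V lt ∧
    ∀ e ∈ G.edgeSet, ∀ f ∈ G.edgeSet, φ e = φ f → ¬ Cross lt e f

/-- `(lt, φ)` is a `k`-queue layout of `G`: `lt` is a linear (strict total) order on the
vertices and no two edges with the same colour nest. -/
def IsQueueLayout {V : Type*} {k : ℕ} (G : SimpleGraph V)
    (lt : V → V → Prop) (φ : Sym2 V → Fin k) : Prop :=
  IsStrictTotalOrder V lt ∧
    ∀ e ∈ G.edgeSet, ∀ f ∈ G.edgeSet, φ e = φ f → ¬ Nest lt e f

/-- The stack-number of `G`: the least `k` such that `G` has a `k`-stack layout. -/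
noncomputable def stackNumber {V : Type*} (G : SimpleGraph V) : ℕ :=
  sInf {k | ∃ (lt : V → V → Prop) (φ : Sym2 V → Fin k), IsStackLayout G lt φ}

/-- The queue-number of `G`: the least `k` such that `G` has a `k`-queue layout. -/
noncomputable def queueNumber {V : Type*} (G : SimpleGraph V) : ℕ :=
  sInf {k | ∃ (lt : V → V → Prop) (φ : Sym2 V → Fin k), IsQueueLayout G lt φ}

/-- A queue layout is strict if for every vertex `u` and neighbours `v, w` of `u` with
`u ≺ v ≺ w` or `v ≺ w ≺ u`, the edges `uv` and `uw` get different colours. -/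
def IsStrictQueueLayout {V : Type*} {k : ℕ} (G : SimpleGraph V)
    (lt : V → V → Prop) (φ : Sym2 V → Fin k) : Prop :=
  IsQueueLayout G lt φ ∧
    ∀ u v w : V, G.Adj u v → G.Adj u w →
      ((lt u v ∧ lt v w) ∨ (lt v w ∧ lt w u)) → φ s(u, v) ≠ φ s(u, w)

/-- The strict queue-number of `G`. -/
noncomputable def strictQueueNumber {V : Type*} (G : SimpleGraph V) : ℕ :=
  sInf {k | ∃ (lt : V → V → Prop) (φ : Sym2 V → Fin k), IsStrictQueueLayout G lt φ}

/-- A stack layout is dispersable if the colouring is a proper edge-colouring. -/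
def IsDispersableStackLayout {V : Type*} {k : ℕ} (G : SimpleGraph V)
    (lt : V → V → Prop) (φ : Sym2 V → Fin k) : Prop :=
  IsStackLayout G lt φ ∧
    ∀ u v w : V, G.Adj u v → G.Adj u w → v ≠ w → φ s(u, v) ≠ φ s(u, w)

/-- The dispersable stack-number of `G`. -/
noncomputable def dispersableStackNumber {V : Type*} (G : SimpleGraph V) : ℕ :=
  sInf {k | ∃ (lt : V → V → Prop) (φ : Sym2 V → Fin k), IsDispersableStackLayout G lt φ}

/-- The star `S_b` with root `none` and leaves `some i`, `i : Fin b`. -/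
def starGraph (b : ℕ) : SimpleGraph (Option (Fin b)) :=
  SimpleGraph.fromRel (fun v w => v = none ∧ w ≠ none)

/-- The triangulated grid `H_n` on vertex set `Fin n × Fin n` (0-indexed), with horizontal
edges `(x,y)(x+1,y)`, vertical edges `(x,y)(x,y+1)` and diagonal edges `(x,y)(x+1,y+1)`. -/
def triGrid (n : ℕ) : SimpleGraph (Fin n × Fin n) :=
  SimpleGraph.fromRel (fun p q =>
    ((p.1 : ℕ) + 1 = (q.1 : ℕ) ∧ p.2 = q.2) ∨
    (p.1 = q.1 ∧ (p.2 : ℕ) + 1 = (q.2 : ℕ)) ∨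
    ((p.1 : ℕ) + 1 = (q.1 : ℕ) ∧ (p.2 : ℕ) + 1 = (q.2 : ℕ)))

/-- if `a₁ ≺ ⋯ ≺ a_m`, the `b_j` are ordered like the `a_j`, all `a_j ≺ b_j`
or all `b_j ≺ a_j`, and no two of the pairs `{a_j, b_j}` cross, then the two sequences
interleave perfectly: `a₁ ≺ b₁ ≺ a₂ ≺ b₂ ≺ ⋯` or `b₁ ≺ a₁ ≺ b₂ ≺ a₂ ≺ ⋯`. -/
theorem stmt10 {V : Type*} (lt : V → V → Prop) (hlt : IsStrictTotalOrder V lt)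
    (m : ℕ) (a b : Fin m → V)
    (hab : ∀ i j : Fin m, a i ≠ b j)
    (ha : Function.Injective a) (hb : Function.Injective b)
    (hmono : ∀ i j : Fin m, i < j → lt (a i) (a j))
    (h1 : ∀ j k : Fin m, lt (a j) (a k) ↔ lt (b j) (b k))
    (h2 : (∀ j, lt (a j) (b j)) ∨ (∀ j, lt (b j) (a j)))
    (h3 : ∀ j k : Fin m, j ≠ k → ¬ Cross lt s(a j, b j) s(a k, b k)) :
    ((∀ j, lt (a j) (b j)) ∧ ∀ j k : Fin m, (j : ℕ) + 1 = (k : ℕ) → lt (b j) (a k)) ∨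
    ((∀ j, lt (b j) (a j)) ∧ ∀ j k : Fin m, (j : ℕ) + 1 = (k : ℕ) → lt (a j) (b k)) := by
  have tri : ∀ x y, lt x y ∨ x = y ∨ lt y x := fun x y => by
    by_cases hxy : lt x y
    · exact Or.inl hxy
    by_cases hyx : lt y x
    · exact Or.inr (Or.inr hyx)
    exact Or.inr (Or.inl (hlt.trichotomous x y hxy hyx))
  rcases h2 with h2 | h2
  · left
    refine ⟨h2, fun j k hjk => ?_⟩
    have hjlt : j < k := by omega
    have hajak : lt (a j) (a k) := hmono j k hjlt
    have hbjbk : lt (b j) (b k) := (h1 j k).mp hajak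
    rcases tri (b j) (a k) with h | h | h
    · exact h
    · exact absurd h.symm (hab k j)
    · exfalso
      exact h3 j k (by omega) ⟨a j, b j, a k, b k, rfl, rfl,
        Or.inl ⟨hajak, h, hbjbk⟩⟩
  · right
    refine ⟨h2, fun j k hjk => ?_⟩
    have hjlt : j < k := by omega
    have hajak : lt (a j) (a k) := hmono j k hjlt
    have hbjbk : lt (b j) (b k) := (h1 j k).mp hajak
    rcases tri (a j) (b k) with h | h | h
    · exact h
    · exact absurd h (hab j k)
    · exfalso
      exact h3 j k (by omega) ⟨b j, a j, b k, a k, Sym2.eq_swap, Sym2.eq_swap,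
        Or.inl ⟨hbjbk, h, hajak⟩⟩
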